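/- arXiv:2205.05966 — 5 statements merged into one kernel-verified Lean document; each statement's English description precedes it below -/
import Mathlib

section
/- Let M ≥ 4 be an even integer, T > 0, and set Δt := T/M. For each k ∈ {1,…,M/2−1} let s̃_k ∈ ℂ, S_k > 0 and Q_k ∈ ℂ, and let γ > 0 satisfy |Q_k|/√(S_k·Δt) ≤ γ for every such k. Fix j ∈ {0,1,…,M−1} and define ρ̃_0 := 0 and, for k ∈ {1,…,M/2−1}, ρ̃_k := Re(2·conj(Q_k)·s̃_k/(S_k·Δt))·cos(2πjk/M) − Im(2·conj(Q_k)·s̃_k/(S_k·Δt))·sin(2πjk/M). Assume that (Mean({2·Re(s̃_k)/√(S_k·T)}_{k=1,…,M/2−1}))² ≤ 1, (Mean({2·Im(s̃_k)/√(S_k·T)}_{k=1,…,M/2−1}))² ≤ 1, Var({2·Re(s̃_k)/√(S_k·T)}_{k=1,…,M/2−1}) ≤ 4, and Var({2·Im(s̃_k)/√(S_k·T)}_{k=1,…,M/2−1}) ≤ 4. Then Var({ρ̃_k}_{k=0,…,M/2−1}) ≤ 80·M·γ². -/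
open Real

/-- Sample mean of the family `{f k}_{k ∈ s}`. -/
noncomputable def fMean (s : Finset ℕ) (f : ℕ → ℝ) : ℝ := (∑ k ∈ s, f k) / s.card

/-- Sample variance of the family `{f k}_{k ∈ s}`. -/
noncomputable def fVar (s : Finset ℕ) (f : ℕ → ℝ) : ℝ :=
  (∑ k ∈ s, (f k - fMean s f) ^ 2) / s.card

lemma sum_sq_sub_mean (s : Finset ℕ) (f : ℕ → ℝ) :
    ∑ k ∈ s, (f k - fMean s f) ^ 2 = ∑ k ∈ s, f k ^ 2 - s.card * fMean s f ^ 2 := by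
  rcases s.eq_empty_or_nonempty with h | h
  · simp [h]
  have hc : (s.card : ℝ) ≠ 0 := by
    exact_mod_cast Finset.card_ne_zero_of_mem h.choose_spec
  have hsum : ∑ k ∈ s, f k = s.card * fMean s f := by
    unfold fMean; field_simp
  calc ∑ k ∈ s, (f k - fMean s f) ^ 2
      = ∑ k ∈ s, (f k ^ 2 - 2 * fMean s f * f k + fMean s f ^ 2) :=
        Finset.sum_congr rfl fun k _ => by ring
    _ = ∑ k ∈ s, f k ^ 2 - 2 * fMean s f * (∑ k ∈ s, f k) + s.card * fMean s f ^ 2 := by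
        rw [Finset.sum_add_distrib, Finset.sum_sub_distrib, ← Finset.mul_sum,
          Finset.sum_const, nsmul_eq_mul]
    _ = _ := by rw [hsum]; ring

lemma sum_sq_le (s : Finset ℕ) (f : ℕ → ℝ) :
    ∑ k ∈ s, f k ^ 2 ≤ s.card * (fVar s f + fMean s f ^ 2) := by
  rcases s.eq_empty_or_nonempty with h | h
  · simp [h]
  have hc : (0:ℝ) < s.card := by exact_mod_cast Finset.card_pos.mpr h
  have := sum_sq_sub_mean s f
  have hv : fVar s f = (∑ k ∈ s, f k ^ 2 - s.card * fMean s f ^ 2) / s.card := by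
    rw [fVar, this]
  rw [hv]; field_simp
  nlinarith [sq_nonneg (fMean s f), hc]

lemma fVar_le_second_moment (s : Finset ℕ) (f : ℕ → ℝ) :
    fVar s f ≤ (∑ k ∈ s, f k ^ 2) / s.card := by
  rcases s.eq_empty_or_nonempty with h | h
  · simp [h, fVar]
  have hc : (0:ℝ) < s.card := by exact_mod_cast Finset.card_pos.mpr h
  rw [fVar]
  apply (div_le_div_iff_of_pos_right hc).mpr
  rw [sum_sq_sub_mean]
  nlinarith [sq_nonneg (fMean s f), hc]
set_option maxHeartbeats 1000000 in
/-- Variance bound for the summands of the SNR computation: under the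
normalization bounds on the whitened data, the family
`ρ̃ 0 = 0`, `ρ̃ k = Re(2·conj(Q k)·sf k/(S k·Δt))·cos(2πjk/M)
             − Im(2·conj(Q k)·sf k/(S k·Δt))·sin(2πjk/M)`
has sample variance at most `80·M·γ²` over `{0,…,M/2−1}`. -/
theorem var_snr_summand_le (M : ℕ) (hM4 : 4 ≤ M) (hMe : Even M)
    (T : ℝ) (hT : 0 < T) (Δt : ℝ) (hΔt : Δt = T / M)
    (sf Q : ℕ → ℂ) (S : ℕ → ℝ)
    (hS : ∀ k ∈ Finset.Icc 1 (M / 2 - 1), 0 < S k)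
    (γ : ℝ) (hγ : 0 < γ)
    (hQ : ∀ k ∈ Finset.Icc 1 (M / 2 - 1),
      ‖Q k‖ / Real.sqrt (S k * Δt) ≤ γ)
    (j : ℕ) (hj : j < M)
    (ρ : ℕ → ℝ) (hρ0 : ρ 0 = 0)
    (hρ : ∀ k ∈ Finset.Icc 1 (M / 2 - 1),
      ρ k = (2 * (starRingEnd ℂ) (Q k) * sf k / ((S k * Δt : ℝ) : ℂ)).re *
              Real.cos (2 * π * (j : ℝ) * (k : ℝ) / (M : ℝ))
          - (2 * (starRingEnd ℂ) (Q k) * sf k / ((S k * Δt : ℝ) : ℂ)).im *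
              Real.sin (2 * π * (j : ℝ) * (k : ℝ) / (M : ℝ)))
    (hmRe : (fMean (Finset.Icc 1 (M / 2 - 1))
        (fun k => 2 * (sf k).re / Real.sqrt (S k * T))) ^ 2 ≤ 1)
    (hmIm : (fMean (Finset.Icc 1 (M / 2 - 1))
        (fun k => 2 * (sf k).im / Real.sqrt (S k * T))) ^ 2 ≤ 1)
    (hvRe : fVar (Finset.Icc 1 (M / 2 - 1))
        (fun k => 2 * (sf k).re / Real.sqrt (S k * T)) ≤ 4)
    (hvIm : fVar (Finset.Icc 1 (M / 2 - 1))
        (fun k => 2 * (sf k).im / Real.sqrt (S k * T)) ≤ 4) :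
    fVar (Finset.range (M / 2)) ρ ≤ 80 * M * γ ^ 2 := by
  have hM0 : (0:ℝ) < M := by positivity
  have hΔt0 : 0 < Δt := by rw [hΔt]; positivity
  set n := M / 2 - 1 with hn
  set s := Finset.Icc 1 n with hsdef
  have hn1 : 1 ≤ n := by omega
  have hcard : s.card = n := by simp [hsdef]
  have hM2 : M / 2 = n + 1 := by omega
  -- pointwise bound
  set a : ℕ → ℝ := fun k => 2 * (sf k).re / Real.sqrt (S k * T) with ha
  set b : ℕ → ℝ := fun k => 2 * (sf k).im / Real.sqrt (S k * T) with hb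
  have hpt : ∀ k ∈ s, ρ k ^ 2 ≤ M * γ ^ 2 * (a k ^ 2 + b k ^ 2) := by
    intro k hk
    have hSk : 0 < S k := hS k hk
    have hr : 0 < S k * Δt := by positivity
    have hST : 0 < S k * T := by positivity
    set w : ℂ := 2 * (starRingEnd ℂ) (Q k) * sf k / ((S k * Δt : ℝ) : ℂ) with hw
    set θ : ℝ := 2 * π * (j : ℝ) * (k : ℝ) / (M : ℝ) with hθ
    have h1 : ρ k ^ 2 ≤ w.re ^ 2 + w.im ^ 2 := by
      rw [hρ k hk]
      nlinarith [Real.sin_sq_add_cos_sq θ, sq_nonneg (w.re * Real.sin θ + w.im * Real.cos θ)]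
    have h2 : w.re ^ 2 + w.im ^ 2 = ‖w‖ ^ 2 := by
      rw [Complex.sq_norm, Complex.normSq_apply]; ring
    have h3 : ‖w‖ = 2 * ‖Q k‖ * ‖sf k‖ / (S k * Δt) := by
      rw [hw, norm_div, norm_mul, norm_mul, Complex.norm_two, Complex.norm_conj,
        Complex.norm_real, Real.norm_eq_abs, abs_of_pos hr]
    have hsq : Real.sqrt (S k * Δt) > 0 := Real.sqrt_pos.mpr hr
    have h4 : ‖Q k‖ ≤ γ * Real.sqrt (S k * Δt) := by
      have := hQ k hk
      rwa [div_le_iff₀ hsq] at this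
    have h4' : ‖Q k‖ ^ 2 ≤ γ ^ 2 * (S k * Δt) := by
      have := Real.sq_sqrt hr.le
      nlinarith [norm_nonneg (Q k), hsq]
    have h5 : ‖w‖ ^ 2 ≤ 4 * γ ^ 2 * ‖sf k‖ ^ 2 / (S k * Δt) := by
      rw [h3, div_pow]
      rw [div_le_div_iff₀ (by positivity) hr]
      have habs := norm_nonneg (sf k)
      have hkey := mul_le_mul_of_nonneg_right h4'
        (by positivity : (0:ℝ) ≤ 4 * ‖sf k‖ ^ 2 * (S k * Δt))
      nlinarith [hkey]
    have h6 : ‖sf k‖ ^ 2 = (sf k).re ^ 2 + (sf k).im ^ 2 := by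
      rw [Complex.sq_norm, Complex.normSq_apply]; ring
    have h7 : 4 * γ ^ 2 * ‖sf k‖ ^ 2 / (S k * Δt)
        = M * γ ^ 2 * (a k ^ 2 + b k ^ 2) := by
      have h1a : a k ^ 2 = 4 * (sf k).re ^ 2 / (S k * T) := by
        show (2 * (sf k).re / Real.sqrt (S k * T)) ^ 2 = _
        rw [div_pow, Real.sq_sqrt hST.le]; ring
      have h1b : b k ^ 2 = 4 * (sf k).im ^ 2 / (S k * T) := by
        show (2 * (sf k).im / Real.sqrt (S k * T)) ^ 2 = _
        rw [div_pow, Real.sq_sqrt hST.le]; ring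
      have hsab : a k ^ 2 + b k ^ 2 = 4 * ((sf k).re ^ 2 + (sf k).im ^ 2) / (S k * T) := by
        rw [h1a, h1b]; ring
      have hrΔ : S k * Δt = S k * T / M := by rw [hΔt]; ring
      rw [hsab, h6, hrΔ, div_div_eq_mul_div]
      ring
    calc ρ k ^ 2 ≤ w.re ^ 2 + w.im ^ 2 := h1
      _ = ‖w‖ ^ 2 := h2
      _ ≤ 4 * γ ^ 2 * ‖sf k‖ ^ 2 / (S k * Δt) := h5
      _ = M * γ ^ 2 * (a k ^ 2 + b k ^ 2) := h7
  -- second moment bounds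
  have hn0 : (0:ℝ) ≤ (n:ℝ) := Nat.cast_nonneg n
  have hsa : ∑ k ∈ s, a k ^ 2 ≤ 5 * (n:ℝ) := by
    have h := sum_sq_le s a
    rw [hcard] at h
    calc ∑ k ∈ s, a k ^ 2 ≤ (n:ℝ) * (fVar s a + fMean s a ^ 2) := h
      _ ≤ (n:ℝ) * 5 := mul_le_mul_of_nonneg_left (by linarith) hn0
      _ = 5 * (n:ℝ) := by ring
  have hsb : ∑ k ∈ s, b k ^ 2 ≤ 5 * (n:ℝ) := by
    have h := sum_sq_le s b
    rw [hcard] at h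
    calc ∑ k ∈ s, b k ^ 2 ≤ (n:ℝ) * (fVar s b + fMean s b ^ 2) := h
      _ ≤ (n:ℝ) * 5 := mul_le_mul_of_nonneg_left (by linarith) hn0
      _ = 5 * (n:ℝ) := by ring
  -- sum over range
  have hrange : Finset.range (M / 2) = insert 0 s := by
    ext x
    simp only [Finset.mem_range, Finset.mem_insert, hsdef, Finset.mem_Icc]
    omega
  have hsum : ∑ k ∈ Finset.range (M / 2), ρ k ^ 2 ≤ 10 * M * γ ^ 2 * n := by
    rw [hrange, Finset.sum_insert (by simp [hsdef]), hρ0]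
    have : ∑ k ∈ s, ρ k ^ 2 ≤ ∑ k ∈ s, M * γ ^ 2 * (a k ^ 2 + b k ^ 2) :=
      Finset.sum_le_sum hpt
    calc (0:ℝ) ^ 2 + ∑ k ∈ s, ρ k ^ 2 = ∑ k ∈ s, ρ k ^ 2 := by ring_nf
      _ ≤ M * γ ^ 2 * ∑ k ∈ s, (a k ^ 2 + b k ^ 2) := by
          rw [Finset.mul_sum]; exact this
      _ ≤ M * γ ^ 2 * (5 * n + 5 * n) := by
          have := Finset.sum_add_distrib (s := s) (f := fun k => a k ^ 2) (g := fun k => b k ^ 2)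
          rw [this]
          have hMγ : (0:ℝ) ≤ M * γ ^ 2 := by positivity
          nlinarith [hsa, hsb]
      _ = 10 * M * γ ^ 2 * n := by ring
  have hcr : (Finset.range (M / 2)).card = n + 1 := by simp [hM2]
  have hfv := fVar_le_second_moment (Finset.range (M / 2)) ρ
  rw [hcr] at hfv
  have hdiv : (∑ k ∈ Finset.range (M / 2), ρ k ^ 2) / ((n:ℝ) + 1) ≤ 10 * M * γ ^ 2 := by
    rw [div_le_iff₀ (by positivity)]
    have hnn : (n:ℝ) ≤ (n:ℝ) + 1 := by linarith
    calc ∑ k ∈ Finset.range (M / 2), ρ k ^ 2 ≤ 10 * M * γ ^ 2 * n := hsum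
      _ ≤ 10 * M * γ ^ 2 * ((n:ℝ) + 1) := by nlinarith [hnn, hM0, sq_nonneg γ]
  have : fVar (Finset.range (M / 2)) ρ ≤ 10 * M * γ ^ 2 := by
    calc fVar (Finset.range (M / 2)) ρ ≤ _ := hfv
      _ ≤ 10 * M * γ ^ 2 := by exact_mod_cast hdiv
  nlinarith [this, hM0, sq_nonneg γ]
end

section
/- Let μ ∈ ℝ, ε > 0 and δ ∈ (0,1), and set N := 12·⌈log(1/δ)⌉ + 1 (natural logarithm). Let Y_1,…,Y_N be independent, identically distributed real-valued random variables such that P(|Y_i − μ| ≤ ε) ≥ 3/4 for each i. Then the probability that the median of Y_1,…,Y_N is within ε of μ is at least 1 − δ, i.e. P(|med(Y_1,…,Y_N) − μ| ≤ ε) ≥ 1 − δ. -/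
open scoped Classical
open MeasureTheory ProbabilityTheory

/-- The median of an odd-length family of reals: the middle entry of the list
sorted in nondecreasing order (the `(N+1)/2`-th smallest value). -/
noncomputable def med {N : ℕ} (x : Fin N → ℝ) : ℝ :=
  ((List.ofFn x).insertionSort (· ≤ ·)).getD (N / 2) 0

lemma card_eq_countP {N : ℕ} (x : Fin N → ℝ) (p : ℝ → Prop) [DecidablePred p] :
    (Finset.univ.filter (fun i => p (x i))).card
      = (List.ofFn x).countP (fun y => decide (p y)) := by
  have h2 := Multiset.countP_map x Finset.univ.val p
  rw [Fin.univ_val_map] at h2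
  have h3 : Multiset.countP p (↑(List.ofFn x)) = (List.ofFn x).countP (fun y => decide (p y)) :=
    Multiset.coe_countP _ _
  rw [← h3, h2]
  have h1 : (Finset.univ.filter (fun i => p (x i))).card
      = Multiset.countP (fun i => p (x i)) Finset.univ.val := by
    rw [Multiset.countP_eq_card_filter]; rfl
  rw [h1, Multiset.countP_eq_card_filter]

lemma med_close {N : ℕ} (hN : 0 < N) (x : Fin N → ℝ) (a b : ℝ)
    (h : N / 2 + 1 ≤ (List.ofFn x).countP (fun y => decide (a ≤ y ∧ y ≤ b))) :
    a ≤ med x ∧ med x ≤ b := by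
  set q : ℝ → Bool := fun y => decide (a ≤ y ∧ y ≤ b) with hq
  set l := (List.ofFn x).insertionSort (· ≤ ·) with hl
  have hlen : l.length = N := by
    rw [hl, List.length_insertionSort, List.length_ofFn]
  have hsort : List.Pairwise (· ≤ ·) l := List.pairwise_insertionSort _ _
  have hperm : l.Perm (List.ofFn x) := List.perm_insertionSort _ _
  have hcount : N / 2 + 1 ≤ l.countP q := by
    rw [hperm.countP_eq]; exact h
  have hh : N / 2 < l.length := by
    rw [hlen]; exact Nat.div_lt_self hN one_lt_two
  have hmed : med x = l[N / 2] := List.getD_eq_getElem l 0 hh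
  have hmono : ∀ (i j : ℕ) (hi : i < l.length) (hj : j < l.length), i ≤ j → l[i] ≤ l[j] := by
    intro i j hi hj hij
    rcases eq_or_lt_of_le hij with rfl | hlt
    · rfl
    · exact List.Pairwise.rel_get_of_lt hsort (a := ⟨i, hi⟩) (b := ⟨j, hj⟩) hlt
  have hub : l[N / 2] ≤ b := by
    by_contra hb
    push_neg at hb
    have hdrop : (l.drop (N / 2)).countP q = 0 := by
      rw [List.countP_eq_zero]
      intro y hy
      obtain ⟨j, hj, rfl⟩ := List.getElem_of_mem hy
      have hjlen : N / 2 + j < l.length := by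
        rw [List.length_drop] at hj; omega
      rw [show (List.drop (N / 2) l)[j] = l[N / 2 + j]'hjlen from List.getElem_drop]
      have : b < l[N / 2 + j] := lt_of_lt_of_le hb
        (hmono (N / 2) (N / 2 + j) hh hjlen (by omega))
      simp only [hq, decide_eq_true_eq, not_and]
      intro _
      exact this.not_ge
    have := List.countP_append (p := q) (l₁ := l.take (N / 2)) (l₂ := l.drop (N / 2))
    rw [List.take_append_drop] at this
    have h1 : (l.take (N / 2)).countP q ≤ N / 2 := by
      calc (l.take (N / 2)).countP q ≤ (l.take (N / 2)).length := List.countP_le_length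
        _ ≤ N / 2 := by simp [List.length_take]
    omega
  have hlb : a ≤ l[N / 2] := by
    by_contra ha
    push_neg at ha
    have htake : (l.take (N / 2 + 1)).countP q = 0 := by
      rw [List.countP_eq_zero]
      intro y hy
      obtain ⟨j, hj, rfl⟩ := List.getElem_of_mem hy
      rw [List.getElem_take]
      have hjlen : j < l.length := by
        have := List.length_take (i := N / 2 + 1) (l := l); omega
      have hjle : j ≤ N / 2 := by
        have := List.length_take (i := N / 2 + 1) (l := l); omega
      have : l[j] < a := lt_of_le_of_lt (hmono j (N / 2) hjlen hh hjle) ha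
      simp only [hq, decide_eq_true_eq, not_and]
      intro h'
      exact absurd h' this.not_ge
    have := List.countP_append (p := q) (l₁ := l.take (N / 2 + 1)) (l₂ := l.drop (N / 2 + 1))
    rw [List.take_append_drop] at this
    have h2 : (l.drop (N / 2 + 1)).countP q ≤ N - (N / 2 + 1) := by
      calc (l.drop (N / 2 + 1)).countP q ≤ (l.drop (N / 2 + 1)).length := List.countP_le_length
        _ ≤ N - (N / 2 + 1) := by simp [List.length_drop, hlen]
    omega
  rw [hmed]
  exact ⟨hlb, hub⟩

/-- Powering lemma: if each of `N = 12⌈log δ⁻¹⌉ + 1` i.i.d. random variables is an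
`ε`-approximation of `μ` with probability at least `3/4`, then their median is an
`ε`-approximation of `μ` with probability at least `1 − δ`. -/
theorem median_powering (μ ε δ : ℝ) (hε : 0 < ε) (hδ : δ ∈ Set.Ioo (0 : ℝ) 1)
    (N : ℕ) (hN : N = 12 * ⌈Real.log (1 / δ)⌉₊ + 1)
    {Ω : Type*} [MeasurableSpace Ω] (P : Measure Ω) [IsProbabilityMeasure P]
    (Y : Fin N → Ω → ℝ) (hmeas : ∀ i, Measurable (Y i))
    (hindep : iIndepFun Y P)
    (hident : ∀ i j, IdentDistrib (Y i) (Y j) P P)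
    (hgood : ∀ i, (3 : ℝ) / 4 ≤ (P {ω | |Y i ω - μ| ≤ ε}).toReal) :
    1 - δ ≤ (P {ω | |med (fun i => Y i ω) - μ| ≤ ε}).toReal := by
  obtain ⟨hδ0, hδ1⟩ := hδ
  set k : ℕ := ⌈Real.log (1 / δ)⌉₊ with hk
  set t : ℝ := Real.log 3 with ht
  set g : ℝ → ℝ := fun y => if ε < |y - μ| then 1 else 0 with hg
  have hgmeas : Measurable g := by
    apply Measurable.ite _ measurable_const measurable_const
    exact measurableSet_lt measurable_const ((measurable_id.sub_const μ).abs)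
  set X : Fin N → Ω → ℝ := fun i => g ∘ Y i with hX
  have hXmeas : ∀ i, Measurable (X i) := fun i => hgmeas.comp (hmeas i)
  have hXindep : iIndepFun X P := hindep.comp _ (fun _ => hgmeas)
  have hB : ∀ i, MeasurableSet {ω | ε < |Y i ω - μ|} := fun i =>
    measurableSet_lt measurable_const ((hmeas i).sub_const μ).abs
  -- bad probability bound
  have hbad : ∀ i, (P {ω | ε < |Y i ω - μ|}).toReal ≤ 1 / 4 := by
    intro i
    have hBc : {ω | ε < |Y i ω - μ|} = {ω | |Y i ω - μ| ≤ ε}ᶜ := by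
      ext ω; simp [not_le]
    have hGmeas : MeasurableSet {ω | |Y i ω - μ| ≤ ε} :=
      measurableSet_le ((hmeas i).sub_const μ).abs measurable_const
    rw [hBc, prob_compl_eq_one_sub hGmeas,
      ENNReal.toReal_sub_of_le prob_le_one ENNReal.one_ne_top]
    have := hgood i
    simp only [ENNReal.toReal_one]
    linarith
  -- integrability
  have hXint : ∀ i, Integrable (X i) P := by
    intro i
    refine Integrable.mono' (integrable_const 1) (hXmeas i).aestronglyMeasurable ?_
    filter_upwards with ω
    simp only [hX, hg, Function.comp_apply]
    split <;> simp
  -- integral of X i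
  have hXintegral : ∀ i, ∫ ω, X i ω ∂P = (P {ω | ε < |Y i ω - μ|}).toReal := by
    intro i
    have : X i = Set.indicator {ω | ε < |Y i ω - μ|} (fun _ => (1 : ℝ)) := by
      funext ω
      simp only [hX, hg, Function.comp_apply, Set.indicator_apply, Set.mem_setOf_eq]
    rw [this, integral_indicator_const _ (hB i)]
    simp
    rfl
  -- exp(t * X i ω) = 1 + 2 * X i ω
  have hexpX : ∀ i, (fun ω => Real.exp (t * X i ω)) = fun ω => 1 + 2 * X i ω := by
    intro i
    funext ω
    simp only [hX, hg, Function.comp_apply]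
    split
    · rw [mul_one, ht, Real.exp_log (by norm_num)]; norm_num
    · simp
  have hXint' : ∀ i, Integrable (fun ω => Real.exp (t * X i ω)) P := by
    intro i
    rw [hexpX i]
    exact (integrable_const 1).add ((hXint i).const_mul 2)
  -- mgf bound
  have hmgf : ∀ i, mgf (X i) P t ≤ 3 / 2 := by
    intro i
    unfold mgf
    rw [hexpX i]
    rw [integral_add (integrable_const 1) ((hXint i).const_mul 2)]
    rw [integral_const_mul, hXintegral i]
    simp only [integral_const, Measure.real, measure_univ, ENNReal.toReal_one, smul_eq_mul, one_mul]
    have := hbad i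
    linarith
  -- Chernoff
  set c : ℝ := ((6 * k + 1 : ℕ) : ℝ) with hc
  have ht0 : (0 : ℝ) ≤ t := Real.log_nonneg (by norm_num)
  have hintsum : Integrable (fun ω => Real.exp (t * (∑ i, X i) ω)) P :=
    hXindep.integrable_exp_mul_sum hXmeas (fun i _ => hXint' i)
  have hchern := measure_ge_le_exp_mul_mgf (X := ∑ i, X i) (μ := P) c ht0 hintsum
  have hmgfsum : mgf (∑ i, X i) P t ≤ (3 / 2) ^ N := by
    rw [hXindep.mgf_sum hXmeas]
    calc ∏ i, mgf (X i) P t ≤ ∏ _i : Fin N, (3 / 2 : ℝ) :=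
          Finset.prod_le_prod (fun i _ => mgf_nonneg) (fun i _ => hmgf i)
      _ = (3 / 2) ^ N := by simp [div_pow]
  -- numeric bound : exp (-t * c) * (3/2)^N ≤ δ
  have hnum : Real.exp (-t * c) * (3 / 2 : ℝ) ^ N ≤ δ := by
    have h3 : Real.exp (-t) = 3⁻¹ := by
      rw [ht, Real.exp_neg, Real.exp_log (by norm_num)]
    have hexp : Real.exp (-t * c) = (3⁻¹ : ℝ) ^ (6 * k + 1) := by
      rw [hc, show -t * ((6 * k + 1 : ℕ) : ℝ) = ((6 * k + 1 : ℕ) : ℝ) * (-t) by ring,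
        Real.exp_nat_mul, h3]
    rw [hexp, hN]
    have hsplit : (3⁻¹ : ℝ) ^ (6 * k + 1) * (3 / 2) ^ (12 * k + 1)
        = ((729 : ℝ) / 4096) ^ k * (1 / 2) := by
      have e1 : (3⁻¹ : ℝ) ^ (6 * k + 1) = ((3⁻¹ : ℝ) ^ 6) ^ k * 3⁻¹ := by
        rw [pow_succ, pow_mul]
      have e2 : ((3 : ℝ) / 2) ^ (12 * k + 1) = (((3 : ℝ) / 2) ^ 12) ^ k * (3 / 2) := by
        rw [pow_succ, pow_mul]
      rw [e1, e2, show ((729 : ℝ) / 4096) = (3⁻¹ : ℝ) ^ 6 * ((3 : ℝ) / 2) ^ 12 by norm_num,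
        mul_pow]
      ring
    rw [hsplit]
    have hbase : (729 : ℝ) / 4096 ≤ Real.exp (-1) := by
      have h1 : Real.exp 1 ≤ 2.7182818286 := Real.exp_one_lt_d9.le
      have h2 : (729 : ℝ) / 4096 * Real.exp 1 ≤ 1 := by nlinarith
      calc (729 : ℝ) / 4096 = (729 / 4096 * Real.exp 1) / Real.exp 1 := by
            field_simp
        _ ≤ 1 / Real.exp 1 := by gcongr
        _ = Real.exp (-1) := by rw [Real.exp_neg, one_div]
    have hpow : ((729 : ℝ) / 4096) ^ k ≤ Real.exp (-1) ^ k :=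
      pow_le_pow_left₀ (by norm_num) hbase k
    have hek : Real.exp (-1 : ℝ) ^ k = Real.exp (-(k : ℝ)) := by
      rw [← Real.exp_nat_mul]; norm_num
    have hkd : Real.exp (-(k : ℝ)) ≤ δ := by
      have h1 : Real.log (1 / δ) ≤ (k : ℝ) := Nat.le_ceil _
      have h2 : Real.log (1 / δ) = -Real.log δ := by rw [one_div, Real.log_inv]
      have : -(k : ℝ) ≤ Real.log δ := by linarith
      calc Real.exp (-(k : ℝ)) ≤ Real.exp (Real.log δ) := Real.exp_le_exp.mpr this
        _ = δ := Real.exp_log hδ0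
    nlinarith [pow_nonneg (show (0:ℝ) ≤ 729/4096 by norm_num) k, Real.exp_pos (-(k:ℝ))]
  -- the bad event
  set A : Set Ω := {ω | c ≤ ∑ i, X i ω} with hA
  have hAeq : {ω | c ≤ (∑ i : Fin N, X i) ω} = A := by
    ext ω; simp [hA, Finset.sum_apply]
  have hAmeas : MeasurableSet A :=
    measurableSet_le measurable_const (Finset.measurable_sum _ (fun i _ => hXmeas i))
  have hPA : (P A).toReal ≤ δ := by
    rw [← hAeq]
    calc (P {ω | c ≤ (∑ i : Fin N, X i) ω}).toReal
        ≤ Real.exp (-t * c) * mgf (∑ i : Fin N, X i) P t := hchern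
      _ ≤ Real.exp (-t * c) * (3 / 2) ^ N := by
          gcongr
      _ ≤ δ := hnum
  -- complement subset of target
  have hsubset : Aᶜ ⊆ {ω | |med (fun i => Y i ω) - μ| ≤ ε} := by
    intro ω hω
    simp only [hA, Set.mem_compl_iff, Set.mem_setOf_eq, not_le] at hω
    -- the sum counts the bad indices
    have hsum : ∑ i, X i ω
        = ((Finset.univ.filter (fun i => ε < |Y i ω - μ|)).card : ℝ) := by
      simp only [hX, hg, Function.comp_apply]
      rw [Finset.sum_boole]
    rw [hsum] at hω
    have hbadcard : (Finset.univ.filter (fun i => ε < |Y i ω - μ|)).card ≤ 6 * k := by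
      have := hω
      rw [hc] at this
      exact_mod_cast Nat.lt_succ_iff.mp (by exact_mod_cast this)
    have hcardsum := Finset.card_filter_add_card_filter_not
      (s := (Finset.univ : Finset (Fin N))) (p := fun i => ε < |Y i ω - μ|)
    have hgoodcard : N / 2 + 1
        ≤ (Finset.univ.filter (fun i => ¬ (ε < |Y i ω - μ|))).card := by
      rw [Finset.card_univ, Fintype.card_fin] at hcardsum
      omega
    have hgood2 : (Finset.univ.filter (fun i => μ - ε ≤ Y i ω ∧ Y i ω ≤ μ + ε)).card
        = (Finset.univ.filter (fun i => ¬ (ε < |Y i ω - μ|))).card := by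
      congr 1
      apply Finset.filter_congr
      intro i _
      simp only [not_lt, abs_le, eq_iff_iff]
      constructor
      · rintro ⟨h1, h2⟩; constructor <;> linarith
      · rintro ⟨h1, h2⟩; constructor <;> linarith
    have hcnt := card_eq_countP (fun i => Y i ω) (fun y => μ - ε ≤ y ∧ y ≤ μ + ε)
    have hmc := med_close (by omega) (fun i => Y i ω) (μ - ε) (μ + ε)
      (by rw [← hcnt, hgood2]; exact hgoodcard)
    simp only [Set.mem_setOf_eq]
    rw [abs_le]
    constructor <;> linarith [hmc.1, hmc.2]
  calc 1 - δ ≤ 1 - (P A).toReal := by linarith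
    _ = (P Aᶜ).toReal := by
        rw [prob_compl_eq_one_sub hAmeas,
          ENNReal.toReal_sub_of_le prob_le_one ENNReal.one_ne_top]
        simp
    _ ≤ (P {ω | |med (fun i => Y i ω) - μ| ≤ ε}).toReal :=
        ENNReal.toReal_mono (measure_ne_top _ _) (measure_mono hsubset)
end

section
/- Let N ≥ 1 and M ≥ 1 be integers, let ρ_soft < ρ_hard be real numbers, and set ε := (ρ_hard − ρ_soft)/2 and ρ_mid := (ρ_hard + ρ_soft)/2. Let δ′ ∈ (0, 1/2]. For each pair (m,j) ∈ {0,…,N−1}×{0,…,M−1} let ρ_{m,j} ∈ ℝ, let 𝒴_{m,j} be a finite set of real numbers, and let α_{m,j,y} ∈ ℂ for y ∈ 𝒴_{m,j}, satisfying ∑_{y ∈ 𝒴_{m,j}, |y − ρ_{m,j}| ≤ ε} |α_{m,j,y}|² ≥ 1 − δ′. Define p₁ := (1/(N·M))·∑_{(m,j)} ∑_{y ∈ 𝒴_{m,j}, y ≥ ρ_mid} |α_{m,j,y}|² and r̃ := #{(m,j) : ρ_{m,j} ≥ ρ_hard}/(N·M). Then p₁ ≥ r̃/2; in particular, if there exists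 a pair (m,j) with ρ_{m,j} ≥ ρ_hard, then p₁ ≥ 1/(2·N·M). -/
open scoped Classical

/-- Amplitude lower bound for the proposed quantum matched-filtering algorithm:
if each QMCI output distribution puts weight at least `1 − δ′ ≥ 1/2` on
`ε`-approximations of the true SNR `ρ m j`, then the probability `p₁` of
measuring the 'matched' flag satisfies `p₁ ≥ r̃(ρ_hard)/2`; in particular,
`p₁ ≥ 1/(2NM)` whenever some pair has SNR at least `ρ_hard`. -/
theorem matched_flag_prob_lower_bound (N M : ℕ) (hN : 0 < N) (hM : 0 < M)
    (ρsoft ρhard : ℝ) (hρ : ρsoft < ρhard)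
    (ε ρmid : ℝ) (hε : ε = (ρhard - ρsoft) / 2) (hmid : ρmid = (ρhard + ρsoft) / 2)
    (δ' : ℝ) (hδ' : δ' ∈ Set.Ioc (0 : ℝ) (1 / 2))
    (ρ : Fin N → Fin M → ℝ) (Y : Fin N → Fin M → Finset ℝ)
    (α : Fin N → Fin M → ℝ → ℂ)
    (hgood : ∀ m j, 1 - δ' ≤
      ∑ y ∈ (Y m j).filter (fun y => |y - ρ m j| ≤ ε), ‖α m j y‖ ^ 2)
    (p₁ : ℝ) (hp₁ : p₁ = (1 / ((N : ℝ) * M)) *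
      ∑ m, ∑ j, ∑ y ∈ (Y m j).filter (fun y => ρmid ≤ y), ‖α m j y‖ ^ 2)
    (rt : ℝ) (hrt : rt =
      ((Finset.univ.filter (fun p : Fin N × Fin M => ρhard ≤ ρ p.1 p.2)).card : ℝ)
        / ((N : ℝ) * M)) :
    rt / 2 ≤ p₁ ∧ ((∃ m j, ρhard ≤ ρ m j) → 1 / (2 * (N : ℝ) * M) ≤ p₁) := by
  have hNM : (0 : ℝ) < (N : ℝ) * M := by positivity
  set A : Fin N × Fin M → ℝ := fun p =>
    ∑ y ∈ (Y p.1 p.2).filter (fun y => ρmid ≤ y), ‖α p.1 p.2 y‖ ^ 2 with hA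
  have hAnn : ∀ p, 0 ≤ A p := fun p => Finset.sum_nonneg fun y _ => by positivity
  have hkey : ∀ p : Fin N × Fin M, ρhard ≤ ρ p.1 p.2 → (1 : ℝ) / 2 ≤ A p := by
    intro p hp
    have hsub : (Y p.1 p.2).filter (fun y => |y - ρ p.1 p.2| ≤ ε) ⊆
        (Y p.1 p.2).filter (fun y => ρmid ≤ y) := by
      intro y hy
      simp only [Finset.mem_filter] at hy ⊢
      refine ⟨hy.1, ?_⟩
      have := abs_le.mp hy.2
      have : ρ p.1 p.2 - ε ≤ y := by linarith [this.1]
      have : ρhard - ε ≤ y := by linarith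
      rw [hmid]; rw [hε] at this; linarith
    have h1 : (1 : ℝ) - δ' ≤ A p := by
      refine le_trans (hgood p.1 p.2) (Finset.sum_le_sum_of_subset_of_nonneg hsub ?_)
      intro y _ _; positivity
    have : (1 : ℝ) / 2 ≤ 1 - δ' := by linarith [hδ'.2]
    linarith
  set S := Finset.univ.filter (fun p : Fin N × Fin M => ρhard ≤ ρ p.1 p.2) with hS
  have hT : (S.card : ℝ) / 2 ≤ ∑ p : Fin N × Fin M, A p := by
    calc (S.card : ℝ) / 2 = ∑ _p ∈ S, (1 : ℝ) / 2 := by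
          rw [Finset.sum_const, nsmul_eq_mul]; ring
      _ ≤ ∑ p ∈ S, A p := Finset.sum_le_sum fun p hp =>
          hkey p (Finset.mem_filter.mp hp).2
      _ ≤ ∑ p : Fin N × Fin M, A p :=
          Finset.sum_le_sum_of_subset_of_nonneg (Finset.subset_univ _)
            (fun p _ _ => hAnn p)
  have hTsum : ∑ p : Fin N × Fin M, A p =
      ∑ m, ∑ j, ∑ y ∈ (Y m j).filter (fun y => ρmid ≤ y), ‖α m j y‖ ^ 2 := by
    rw [← Finset.sum_product']
    rfl
  have hp₁' : rt / 2 ≤ p₁ := by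
    rw [hp₁, hrt, ← hTsum]
    rw [div_div]
    rw [div_le_iff₀ (by positivity)]
    have := hT
    calc (S.card : ℝ) = (S.card : ℝ) / 2 * 2 := by ring
      _ ≤ (∑ p : Fin N × Fin M, A p) * 2 := by linarith
      _ = 1 / ((N : ℝ) * M) * (∑ p : Fin N × Fin M, A p) * ((N : ℝ) * M * 2) := by
          field_simp
  refine ⟨hp₁', fun ⟨m, j, hmj⟩ => ?_⟩
  have hcard : 1 ≤ S.card := by
    refine Finset.card_pos.mpr ⟨(m, j), ?_⟩
    simp [hS, hmj]
  have : 1 / ((N : ℝ) * M) ≤ rt := by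
    rw [hrt]
    apply div_le_div_of_nonneg_right _ hNM.le
    exact_mod_cast hcard
  calc 1 / (2 * (N : ℝ) * M) = (1 / ((N : ℝ) * M)) / 2 := by ring
    _ ≤ rt / 2 := by linarith
    _ ≤ p₁ := hp₁'
end

section
/- Let N ≥ 1 and M ≥ 1 be integers, let ρ_soft < ρ_hard be real numbers, and set ε := (ρ_hard − ρ_soft)/2 and ρ_mid := (ρ_hard + ρ_soft)/2. Let δ ∈ (0,1) and δ′ := δ/(4·N·M). For each pair (m,j) ∈ {0,…,N−1}×{0,…,M−1} let ρ_{m,j} ∈ ℝ, let 𝒴_{m,j} be a finite set of real numbers, and let α_{m,j,y} ∈ ℂ for y ∈ 𝒴_{m,j}, satisfying ∑_{y ∈ 𝒴_{m,j}} |α_{m,j,y}|² = 1 and ∑_{y ∈ 𝒴_{m,j}, |y − ρ_{m,j}| ≤ ε} |α_{m,j,y}|² ≥ 1 − δ′. Assume there exists a pair (m,j) with ρ_{m,j} ≥ ρ_hard. Then ∑_{(m,j): ρ_{m,j} ≥ ρ_soft} ∑_{y ∈ 𝒴_{m,j}, y ≥ ρ_mid} |α_{m,j,y}|² ≥ (1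 − δ/2) · ∑_{(m,j)} ∑_{y ∈ 𝒴_{m,j}, y ≥ ρ_mid} |α_{m,j,y}|². -/
open scoped Classical

/-- Conditioned on measuring the 'matched' flag, the measured pair has true SNR at
least `ρ_soft` with probability at least `1 − δ/2`: the weight of flagged outcomes
coming from pairs with `ρ_{m,j} ≥ ρ_soft` is at least `(1 − δ/2)` times the total
flagged weight. -/
theorem flagged_weight_mostly_good (N M : ℕ) (hN : 0 < N) (hM : 0 < M)
    (ρsoft ρhard : ℝ) (hρ : ρsoft < ρhard)
    (ε ρmid : ℝ) (hε : ε = (ρhard - ρsoft) / 2) (hmid : ρmid = (ρhard + ρsoft) / 2)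
    (δ : ℝ) (hδ : δ ∈ Set.Ioo (0 : ℝ) 1)
    (δ' : ℝ) (hδ' : δ' = δ / (4 * (N : ℝ) * M))
    (ρ : Fin N → Fin M → ℝ) (Y : Fin N → Fin M → Finset ℝ)
    (α : Fin N → Fin M → ℝ → ℂ)
    (hnorm : ∀ m j, ∑ y ∈ Y m j, ‖α m j y‖ ^ 2 = 1)
    (hgood : ∀ m j, 1 - δ' ≤
      ∑ y ∈ (Y m j).filter (fun y => |y - ρ m j| ≤ ε), ‖α m j y‖ ^ 2)
    (hex : ∃ m j, ρhard ≤ ρ m j) :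
    (1 - δ / 2) *
        ∑ p : Fin N × Fin M,
          ∑ y ∈ (Y p.1 p.2).filter (fun y => ρmid ≤ y), ‖α p.1 p.2 y‖ ^ 2
      ≤ ∑ p ∈ Finset.univ.filter (fun p : Fin N × Fin M => ρsoft ≤ ρ p.1 p.2),
          ∑ y ∈ (Y p.1 p.2).filter (fun y => ρmid ≤ y),
            ‖α p.1 p.2 y‖ ^ 2 := by
  obtain ⟨hδ0, hδ1⟩ := hδ
  have hN1 : (1:ℝ) ≤ (N:ℝ) := by exact_mod_cast hN
  have hM1 : (1:ℝ) ≤ (M:ℝ) := by exact_mod_cast hM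
  have hNM : (1:ℝ) ≤ (N:ℝ) * M := by nlinarith
  have hδ'pos : 0 < δ' := by rw [hδ']; positivity
  have hδ'le : δ' ≤ δ / 4 := by
    rw [hδ', mul_assoc]
    apply div_le_div_of_nonneg_left hδ0.le (by norm_num)
    nlinarith
  set f : Fin N × Fin M → ℝ := fun p =>
    ∑ y ∈ (Y p.1 p.2).filter (fun y => ρmid ≤ y), ‖α p.1 p.2 y‖ ^ 2 with hf
  have hfnn : ∀ p, 0 ≤ f p := fun p => Finset.sum_nonneg fun y _ => by positivity
  -- bad pairs have small weight
  have hbad : ∀ p : Fin N × Fin M, ρ p.1 p.2 < ρsoft → f p ≤ δ' := by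
    intro p hp
    have hsub : (Y p.1 p.2).filter (fun y => ρmid ≤ y) ⊆
        (Y p.1 p.2).filter (fun y => ¬ |y - ρ p.1 p.2| ≤ ε) := by
      intro y hy
      simp only [Finset.mem_filter] at hy ⊢
      refine ⟨hy.1, fun habs => ?_⟩
      have h1 : y - ρ p.1 p.2 ≤ ε := (abs_le.mp habs).2
      have h2 := hy.2
      rw [hε] at h1
      rw [hmid] at h2
      linarith
    have h3 : f p ≤ ∑ y ∈ (Y p.1 p.2).filter (fun y => ¬ |y - ρ p.1 p.2| ≤ ε),
        ‖α p.1 p.2 y‖ ^ 2 :=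
      Finset.sum_le_sum_of_subset_of_nonneg hsub (fun y _ _ => by positivity)
    have hsplit := Finset.sum_filter_add_sum_filter_not (Y p.1 p.2)
      (fun y => |y - ρ p.1 p.2| ≤ ε) (fun y => ‖α p.1 p.2 y‖ ^ 2)
    have h4 := hgood p.1 p.2
    have h5 := hnorm p.1 p.2
    linarith
  -- the exceptional pair carries weight at least 1 - δ'
  obtain ⟨m0, j0, hm0⟩ := hex
  have hp0 : 1 - δ' ≤ f (m0, j0) := by
    have hsub : (Y m0 j0).filter (fun y => |y - ρ m0 j0| ≤ ε) ⊆
        (Y m0 j0).filter (fun y => ρmid ≤ y) := by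
      intro y hy
      simp only [Finset.mem_filter] at hy ⊢
      refine ⟨hy.1, ?_⟩
      have h1 : -(ε) ≤ y - ρ m0 j0 := (abs_le.mp hy.2).1
      rw [hε] at h1
      rw [hmid]
      linarith
    exact le_trans (hgood m0 j0)
      (Finset.sum_le_sum_of_subset_of_nonneg hsub (fun y _ _ => by positivity))
  set G := Finset.univ.filter (fun p : Fin N × Fin M => ρsoft ≤ ρ p.1 p.2) with hG
  have hsplitT := Finset.sum_filter_add_sum_filter_not (Finset.univ : Finset (Fin N × Fin M))
    (fun p => ρsoft ≤ ρ p.1 p.2) f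
  set S := ∑ p ∈ G, f p with hS
  set B := ∑ p ∈ Finset.univ.filter (fun p : Fin N × Fin M => ¬ ρsoft ≤ ρ p.1 p.2), f p with hB
  have hBle : B ≤ δ / 4 := by
    have h1 : B ≤ ∑ _p ∈ Finset.univ.filter (fun p : Fin N × Fin M => ¬ ρsoft ≤ ρ p.1 p.2), δ' :=
      Finset.sum_le_sum fun p hp => hbad p (not_le.mp (Finset.mem_filter.mp hp).2)
    have h2 : ∑ _p ∈ Finset.univ.filter (fun p : Fin N × Fin M => ¬ ρsoft ≤ ρ p.1 p.2), δ'
        = ((Finset.univ.filter (fun p : Fin N × Fin M => ¬ ρsoft ≤ ρ p.1 p.2)).card : ℝ) * δ' := by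
      rw [Finset.sum_const, nsmul_eq_mul]
    have hcard : ((Finset.univ.filter (fun p : Fin N × Fin M => ¬ ρsoft ≤ ρ p.1 p.2)).card : ℝ)
        ≤ (N : ℝ) * M := by
      have := Finset.card_filter_le (Finset.univ : Finset (Fin N × Fin M))
        (fun p => ¬ ρsoft ≤ ρ p.1 p.2)
      have hcardu : (Finset.univ : Finset (Fin N × Fin M)).card = N * M := by
        simp [Finset.card_univ]
      rw [hcardu] at this
      exact_mod_cast this
    have h3 : ((Finset.univ.filter (fun p : Fin N × Fin M => ¬ ρsoft ≤ ρ p.1 p.2)).card : ℝ) * δ'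
        ≤ (N : ℝ) * M * δ' := mul_le_mul_of_nonneg_right hcard hδ'pos.le
    have h4 : (N : ℝ) * M * δ' = δ / 4 := by
      rw [hδ']
      field_simp
    linarith
  have hBnn : 0 ≤ B := Finset.sum_nonneg fun p _ => hfnn p
  have hSge : 1 - δ' ≤ S := by
    have hmem : (m0, j0) ∈ G := by
      simp only [hG, Finset.mem_filter, Finset.mem_univ, true_and]
      exact le_of_lt (lt_of_lt_of_le hρ hm0)
    exact hp0.trans (Finset.single_le_sum (fun p _ => hfnn p) hmem)
  have hgoal : (1 - δ / 2) * (S + B) ≤ S := by nlinarith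
  calc (1 - δ / 2) * ∑ p : Fin N × Fin M, f p = (1 - δ / 2) * (S + B) := by rw [← hsplitT]
    _ ≤ S := hgoal
end

section
/- Let a ∈ (0, 3/4), let θ := arcsin(√a), and let M ≥ 1 be an integer. Then (1/M)·∑_{j=0}^{M−1} sin²((2j+1)θ) ≥ (1/2)·(1 − 1/(2·M·√a)). -/
open Real Finset

lemma sum_cos_telescope (θ : ℝ) (M : ℕ) :
    (∑ j ∈ Finset.range M, Real.cos (2 * ((2 * (j : ℝ) + 1) * θ))) * (2 * Real.sin (2 * θ))
      = Real.sin (4 * (M : ℝ) * θ) := by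
  induction M with
  | zero => simp
  | succ n ih =>
    rw [Finset.sum_range_succ, add_mul, ih]
    have h : Real.sin (4 * ((n : ℝ) + 1) * θ) - Real.sin (4 * (n : ℝ) * θ)
        = 2 * Real.sin (2 * θ) * Real.cos (2 * ((2 * (n : ℝ) + 1) * θ)) := by
      rw [Real.sin_sub_sin]; ring_nf
    push_cast
    linarith [h]

/-- Success probability of one round of amplitude amplification with a uniformly
random iteration count: for `a = sin²θ ∈ (0, 3/4)`,
`(1/M)·∑_{j=0}^{M−1} sin²((2j+1)θ) ≥ (1/2)(1 − 1/(2M√a))`. -/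
theorem avg_sin_sq_ge (a : ℝ) (ha : a ∈ Set.Ioo (0 : ℝ) (3 / 4))
    (θ : ℝ) (hθ : θ = Real.arcsin (Real.sqrt a))
    (M : ℕ) (hM : 1 ≤ M) :
    (1 / 2) * (1 - 1 / (2 * (M : ℝ) * Real.sqrt a)) ≤
      (1 / (M : ℝ)) * ∑ j ∈ Finset.range M, Real.sin ((2 * (j : ℝ) + 1) * θ) ^ 2 := by
  obtain ⟨ha0, ha1⟩ := ha
  have hsa : 0 < Real.sqrt a := Real.sqrt_pos.mpr ha0
  have hsa1 : Real.sqrt a ≤ 1 := by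
    rw [show (1:ℝ) = Real.sqrt 1 by simp]
    exact Real.sqrt_le_sqrt (by linarith)
  have hsinθ : Real.sin θ = Real.sqrt a := by
    rw [hθ, Real.sin_arcsin (by linarith) hsa1]
  have hcosθ : Real.cos θ = Real.sqrt (1 - a) := by
    rw [hθ, Real.cos_arcsin, Real.sq_sqrt ha0.le]
  have h1a : Real.sqrt (1 - a) ≥ 1 / 2 := by
    have h1 := Real.sq_sqrt (show (0:ℝ) ≤ 1 - a by linarith)
    have h2 := Real.sqrt_nonneg (1 - a)
    nlinarith
  have hs2 : Real.sin (2 * θ) = 2 * Real.sqrt a * Real.sqrt (1 - a) := by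
    rw [Real.sin_two_mul, hsinθ, hcosθ]
  have hs2ge : Real.sqrt a ≤ Real.sin (2 * θ) := by
    rw [hs2]; nlinarith
  have hs2pos : 0 < Real.sin (2 * θ) := lt_of_lt_of_le hsa hs2ge
  have hMpos : (0:ℝ) < M := by exact_mod_cast hM
  -- sum identity
  have hsum : ∑ j ∈ Finset.range M, Real.sin ((2 * (j : ℝ) + 1) * θ) ^ 2
      = (M : ℝ) / 2 - Real.sin (4 * (M : ℝ) * θ) / (4 * Real.sin (2 * θ)) := by
    have hrw : ∀ j ∈ Finset.range M, Real.sin ((2 * (j : ℝ) + 1) * θ) ^ 2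
        = 1 / 2 - Real.cos (2 * ((2 * (j : ℝ) + 1) * θ)) / 2 := fun j _ =>
      Real.sin_sq_eq_half_sub _
    rw [Finset.sum_congr rfl hrw, Finset.sum_sub_distrib, Finset.sum_const,
      Finset.card_range, ← Finset.sum_div]
    have := sum_cos_telescope θ M
    have hne : (2 * Real.sin (2 * θ)) ≠ 0 := by positivity
    have : ∑ j ∈ Finset.range M, Real.cos (2 * ((2 * (j : ℝ) + 1) * θ))
        = Real.sin (4 * (M : ℝ) * θ) / (2 * Real.sin (2 * θ)) := by
      rw [eq_div_iff hne]; exact this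
    rw [this]
    field_simp
    ring
  rw [hsum]
  have hb : Real.sin (4 * (M : ℝ) * θ) / (4 * Real.sin (2 * θ)) ≤ 1 / (4 * Real.sqrt a) := by
    have h1 : Real.sin (4 * (M : ℝ) * θ) / (4 * Real.sin (2 * θ))
        ≤ 1 / (4 * Real.sin (2 * θ)) :=
      div_le_div_of_nonneg_right (Real.sin_le_one _) (by positivity) |>.trans_eq rfl
    refine h1.trans ?_
    apply one_div_le_one_div_of_le (by positivity)
    linarith
  have key : (1 / 2) * (1 - 1 / (2 * (M : ℝ) * Real.sqrt a))
      = (1 / (M : ℝ)) * ((M : ℝ) / 2 - 1 / (4 * Real.sqrt a)) := by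
    field_simp
    ring
  rw [key]
  exact mul_le_mul_of_nonneg_left (by linarith) (by positivity)
end
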